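/- Let r ≥ 1 and 0 ≤ s ≤ r be integers, let b₁, …, b_r be points of [0,∞), and let J be a subset of {1,…,r} of cardinality s chosen uniformly at random among all such subsets. Let φ : [0,∞) → ℝ be a bounded measurable function with ‖φ‖_∞ = sup_x |φ(x)| > 0. Then for every ε > 0, P( | (1/r) Σ_{j ∈ J} φ(b_j) − (s/r) · (1/r) Σ_{j=1}^r φ(b_j) | > ε ) ≤ 2 exp( − r ε² / (64 ‖φ‖_∞²) ). -/

import Mathlib

open MeasureTheory Set

section ThinningAux
open Finset Real
open scoped Classical

variable {r : ℕ}

lemma filt_lt_card {r : ℕ} (k : ℕ) (hk : k ≤ r) :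
    (Finset.univ.filter fun i : Fin r => (i : ℕ) < k).card = k := by
  have : (Finset.univ.filter fun i : Fin r => (i : ℕ) < k)
      = (Finset.range k).attachFin (fun m hm => lt_of_lt_of_le (Finset.mem_range.1 hm) hk) := by
    ext i; simp [Finset.mem_attachFin]
  rw [this, Finset.card_attachFin, Finset.card_range]

lemma filt_ge_card {r : ℕ} (k : ℕ) (hk : k ≤ r) :
    (Finset.univ.filter fun i : Fin r => ¬ (i : ℕ) < k).card = r - k := by
  have h := Finset.card_filter_add_card_filter_not (s := (Finset.univ : Finset (Fin r)))
    (p := fun i : Fin r => (i : ℕ) < k)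
  rw [filt_lt_card k hk, Finset.card_univ, Fintype.card_fin] at h
  omega

lemma chord_exp {ι : Type*} (A : Finset ι) (y : ι → ℝ) (c t : ℝ) (hc : 0 < c)
    (h0 : ∑ i ∈ A, y i = 0) (hb : ∀ i ∈ A, |y i| ≤ c) :
    ∑ i ∈ A, Real.exp (t * y i) ≤ A.card * Real.exp (t ^ 2 * c ^ 2 / 2) := by
  have key : ∀ i ∈ A, Real.exp (t * y i)
      ≤ ((c - y i) / (2 * c)) * Real.exp (-(t * c)) + ((c + y i) / (2 * c)) * Real.exp (t * c) := by
    intro i hi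
    have hy := abs_le.1 (hb i hi)
    have ha : 0 ≤ (c - y i) / (2 * c) := by
      apply div_nonneg (by linarith [hy.2]) (by linarith)
    have hbb : 0 ≤ (c + y i) / (2 * c) := by
      apply div_nonneg (by linarith [hy.1]) (by linarith)
    have hab : (c - y i) / (2 * c) + (c + y i) / (2 * c) = 1 := by
      field_simp; ring
    have := convexOn_exp.2 (Set.mem_univ (-(t*c))) (Set.mem_univ (t*c)) ha hbb hab
    simp only [smul_eq_mul] at this
    have harg : (c - y i) / (2 * c) * -(t * c) + (c + y i) / (2 * c) * (t * c) = t * y i := by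
      field_simp; ring
    rwa [harg] at this
  calc ∑ i ∈ A, Real.exp (t * y i)
      ≤ ∑ i ∈ A, (((c - y i) / (2 * c)) * Real.exp (-(t * c)) + ((c + y i) / (2 * c)) * Real.exp (t * c)) :=
        Finset.sum_le_sum key
    _ = (A.card : ℝ) * Real.cosh (t * c) := by
        rw [Finset.sum_add_distrib, ← Finset.sum_mul, ← Finset.sum_mul]
        have h1 : ∑ i ∈ A, (c - y i) / (2 * c) = A.card / 2 := by
          rw [← Finset.sum_div, Finset.sum_sub_distrib, h0, Finset.sum_const, nsmul_eq_mul]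
          field_simp; ring
        have h2 : ∑ i ∈ A, (c + y i) / (2 * c) = A.card / 2 := by
          rw [← Finset.sum_div, Finset.sum_add_distrib, h0, Finset.sum_const, nsmul_eq_mul]
          field_simp; ring
        rw [h1, h2, Real.cosh_eq]
        ring
    _ ≤ (A.card : ℝ) * Real.exp ((t * c) ^ 2 / 2) := by
        apply mul_le_mul_of_nonneg_left (Real.cosh_le_exp_half_sq _) (by positivity)
    _ = (A.card : ℝ) * Real.exp (t ^ 2 * c ^ 2 / 2) := by ring_nf


private noncomputable def pS (x : Fin r → ℝ) (k : ℕ) (σ : Equiv.Perm (Fin r)) : ℝ :=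
  ∑ i ∈ Finset.univ.filter (fun i : Fin r => (i : ℕ) < k), x (σ i)

private noncomputable def pZ (x : Fin r → ℝ) (k : ℕ) (σ : Equiv.Perm (Fin r)) : ℝ :=
  (pS x k σ - k * ((∑ j, x j) / r)) / ((r : ℝ) - k)

private lemma pS_compl (x : Fin r → ℝ) (k : ℕ) (σ : Equiv.Perm (Fin r)) :
    ∑ i ∈ Finset.univ.filter (fun i : Fin r => ¬ (i : ℕ) < k), x (σ i)
      = (∑ j, x j) - pS x k σ := by
  have h := Finset.sum_filter_add_sum_filter_not (Finset.univ : Finset (Fin r))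
    (fun i : Fin r => (i : ℕ) < k) (fun i => x (σ i))
  have h2 : ∑ i : Fin r, x (σ i) = ∑ j, x j := Equiv.sum_comp σ x
  rw [h2] at h
  unfold pS
  linarith

private lemma pS_swap (x : Fin r → ℝ) (k : ℕ) (hkr : k < r) (σ : Equiv.Perm (Fin r))
    (i : Fin r) (hi : ¬ (i : ℕ) < k) :
    pS x (k + 1) (σ * Equiv.swap (⟨k, hkr⟩ : Fin r) i) = pS x k σ + x (σ i) := by
  have hset : (Finset.univ.filter fun j : Fin r => (j : ℕ) < k + 1)
      = insert (⟨k, hkr⟩ : Fin r) (Finset.univ.filter fun j : Fin r => (j : ℕ) < k) := by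
    ext j
    simp only [Finset.mem_filter, Finset.mem_univ, true_and, Finset.mem_insert]
    constructor
    · intro hj
      rcases Nat.lt_succ_iff_lt_or_eq.1 hj with h | h
      · exact Or.inr h
      · exact Or.inl (Fin.ext h)
    · rintro (rfl | h)
      · exact Nat.lt_succ_self k
      · exact Nat.lt_succ_of_lt h
  have hnotmem : (⟨k, hkr⟩ : Fin r) ∉ (Finset.univ.filter fun j : Fin r => (j : ℕ) < k) := by
    simp
  unfold pS
  rw [hset, Finset.sum_insert hnotmem]
  have h1 : (σ * Equiv.swap (⟨k, hkr⟩ : Fin r) i) ⟨k, hkr⟩ = σ i := by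
    simp [Equiv.Perm.mul_apply, Equiv.swap_apply_left]
  have h2 : ∀ j ∈ (Finset.univ.filter fun j : Fin r => (j : ℕ) < k),
      (σ * Equiv.swap (⟨k, hkr⟩ : Fin r) i) j = σ j := by
    intro j hj
    simp only [Finset.mem_filter, Finset.mem_univ, true_and] at hj
    have hja : j ≠ (⟨k, hkr⟩ : Fin r) := by
      intro h; rw [h] at hj; simp at hj
    have hji : j ≠ i := by
      intro h; rw [h] at hj; omega
    simp [Equiv.Perm.mul_apply, Equiv.swap_apply_of_ne_of_ne hja hji]
  rw [h1, Finset.sum_congr rfl (fun j hj => by rw [h2 j hj])]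
  ring

private noncomputable def pD (x : Fin r → ℝ) (k : ℕ) (σ : Equiv.Perm (Fin r)) (i : Fin r) : ℝ :=
  (pS x k σ + x (σ i) - ((k : ℝ) + 1) * ((∑ j, x j) / r)) / ((r : ℝ) - ((k : ℝ) + 1))
    - pZ x k σ

private lemma pD_key1 (x : Fin r → ℝ) (k : ℕ) (hkr : k < r) (σ : Equiv.Perm (Fin r))
    (i : Fin r) (hi : ¬ (i : ℕ) < k) :
    pZ x (k + 1) (σ * Equiv.swap (⟨k, hkr⟩ : Fin r) i) = pZ x k σ + pD x k σ i := by
  unfold pZ pD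
  rw [pS_swap x k hkr σ i hi]
  push_cast
  unfold pZ
  ring

private lemma pD_eq (x : Fin r → ℝ) (k : ℕ) (hk1 : k + 1 < r) (σ : Equiv.Perm (Fin r))
    (i : Fin r) :
    pD x k σ i = ((pS x k σ - k * ((∑ j, x j) / r))
        + ((r : ℝ) - k) * (x (σ i) - (∑ j, x j) / r))
      / (((r : ℝ) - k) * ((r : ℝ) - ((k : ℝ) + 1))) := by
  have hn1 : (r : ℝ) - k ≠ 0 := by
    have : (k : ℝ) < r := by exact_mod_cast Nat.lt_of_succ_lt hk1
    linarith
  have hn2 : (r : ℝ) - ((k : ℝ) + 1) ≠ 0 := by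
    have : (k : ℝ) + 1 < r := by exact_mod_cast hk1
    linarith
  unfold pD pZ
  field_simp
  ring

private lemma pD_sum0 (x : Fin r → ℝ) (k : ℕ) (hk1 : k + 1 < r) (σ : Equiv.Perm (Fin r)) :
    ∑ i ∈ Finset.univ.filter (fun i : Fin r => ¬ (i : ℕ) < k), pD x k σ i = 0 := by
  have hrpos : (0 : ℝ) < r := by
    have : 0 < r := by omega
    exact_mod_cast this
  have hB : ((Finset.univ.filter fun i : Fin r => ¬ (i : ℕ) < k).card : ℝ) = (r : ℝ) - k := by
    rw [filt_ge_card k (by omega)]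
    push_cast [Nat.cast_sub (by omega : k ≤ r)]
    ring
  have hcompl := pS_compl x k σ
  calc ∑ i ∈ Finset.univ.filter (fun i : Fin r => ¬ (i : ℕ) < k), pD x k σ i
      = (∑ i ∈ Finset.univ.filter (fun i : Fin r => ¬ (i : ℕ) < k),
          ((pS x k σ - k * ((∑ j, x j) / r))
            + ((r : ℝ) - k) * (x (σ i) - (∑ j, x j) / r)))
        / (((r : ℝ) - k) * ((r : ℝ) - ((k : ℝ) + 1))) := by
        rw [Finset.sum_div]
        exact Finset.sum_congr rfl fun i _ => pD_eq x k hk1 σ i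
    _ = 0 := by
        rw [Finset.sum_add_distrib, Finset.sum_const, ← Finset.mul_sum, nsmul_eq_mul, hB]
        have hx : ∑ i ∈ Finset.univ.filter (fun i : Fin r => ¬ (i : ℕ) < k),
            (x (σ i) - (∑ j, x j) / r)
            = ((∑ j, x j) - pS x k σ) - (((r : ℝ) - k) * ((∑ j, x j) / r)) := by
          rw [Finset.sum_sub_distrib, hcompl, Finset.sum_const, nsmul_eq_mul, hB]
        rw [hx, div_eq_zero_iff]
        left
        have hr0 : (r : ℝ) ≠ 0 := ne_of_gt hrpos
        field_simp
        ring

private lemma pD_abs (x : Fin r → ℝ) (C : ℝ) (hC : 0 < C) (hx : ∀ j, |x j| ≤ C)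
    (k : ℕ) (hk1 : k + 1 < r) (σ : Equiv.Perm (Fin r)) (i : Fin r) :
    |pD x k σ i| ≤ 4 * C / ((r : ℝ) - ((k : ℝ) + 1)) := by
  have hrpos : (0 : ℝ) < r := by
    have : 0 < r := by omega
    exact_mod_cast this
  have hn1 : (0 : ℝ) < (r : ℝ) - k := by
    have : (k : ℝ) < r := by exact_mod_cast Nat.lt_of_succ_lt hk1
    linarith
  have hn2 : (0 : ℝ) < (r : ℝ) - ((k : ℝ) + 1) := by
    have : (k : ℝ) + 1 < r := by exact_mod_cast hk1
    linarith
  have hB : ((Finset.univ.filter fun i : Fin r => ¬ (i : ℕ) < k).card : ℝ) = (r : ℝ) - k := by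
    rw [filt_ge_card k (by omega)]
    push_cast [Nat.cast_sub (by omega : k ≤ r)]
    ring
  set m : ℝ := (∑ j, x j) / r with hm
  have hmabs : |m| ≤ C := by
    rw [hm, abs_div, abs_of_pos hrpos, div_le_iff₀ hrpos]
    calc |∑ j, x j| ≤ ∑ j, |x j| := Finset.abs_sum_le_sum_abs _ _
      _ ≤ ∑ _j : Fin r, C := Finset.sum_le_sum fun j _ => hx j
      _ = (r : ℝ) * C := by rw [Finset.sum_const, nsmul_eq_mul, Finset.card_univ, Fintype.card_fin]
      _ = C * r := by ring
  have hdev : ∀ j : Fin r, |x j - m| ≤ 2 * C := by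
    intro j
    calc |x j - m| ≤ |x j| + |m| := abs_sub _ _
      _ ≤ C + C := add_le_add (hx j) hmabs
      _ = 2 * C := by ring
  have hSk : |pS x k σ - k * m| ≤ ((r : ℝ) - k) * (2 * C) := by
    have hkey : pS x k σ - k * m
        = -(∑ i ∈ Finset.univ.filter (fun i : Fin r => ¬ (i : ℕ) < k), (x (σ i) - m)) := by
      rw [Finset.sum_sub_distrib, pS_compl x k σ, Finset.sum_const, nsmul_eq_mul, hB, hm]
      have : (r : ℝ) ≠ 0 := ne_of_gt hrpos
      field_simp
      ring
    rw [hkey, abs_neg]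
    calc |∑ i ∈ Finset.univ.filter (fun i : Fin r => ¬ (i : ℕ) < k), (x (σ i) - m)|
        ≤ ∑ i ∈ Finset.univ.filter (fun i : Fin r => ¬ (i : ℕ) < k), |x (σ i) - m| :=
          Finset.abs_sum_le_sum_abs _ _
      _ ≤ ∑ _i ∈ Finset.univ.filter (fun i : Fin r => ¬ (i : ℕ) < k), (2 * C) :=
          Finset.sum_le_sum fun i _ => hdev (σ i)
      _ = ((r : ℝ) - k) * (2 * C) := by
          rw [Finset.sum_const, nsmul_eq_mul, hB]
  rw [pD_eq x k hk1 σ i, abs_div]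
  rw [abs_of_pos (by positivity : (0:ℝ) < ((r : ℝ) - k) * ((r : ℝ) - ((k : ℝ) + 1)))]
  rw [div_le_div_iff₀ (by positivity) hn2]
  have habs : |pS x k σ - ↑k * ((∑ j, x j) / r) + ((r : ℝ) - ↑k) * (x (σ i) - (∑ j, x j) / r)|
      ≤ ((r : ℝ) - k) * (2 * C) + ((r : ℝ) - k) * (2 * C) := by
    calc |pS x k σ - ↑k * ((∑ j, x j) / r) + ((r : ℝ) - ↑k) * (x (σ i) - (∑ j, x j) / r)|
        ≤ |pS x k σ - ↑k * ((∑ j, x j) / r)| + |((r : ℝ) - ↑k) * (x (σ i) - (∑ j, x j) / r)| :=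
          abs_add_le _ _
      _ ≤ ((r : ℝ) - k) * (2 * C) + ((r : ℝ) - k) * (2 * C) := by
          apply add_le_add
          · exact_mod_cast hSk
          · rw [abs_mul, abs_of_pos hn1]
            exact mul_le_mul_of_nonneg_left (hdev (σ i)) (le_of_lt hn1)
  calc |pS x k σ - ↑k * ((∑ j, x j) / r) + ((r : ℝ) - ↑k) * (x (σ i) - (∑ j, x j) / r)|
        * ((r : ℝ) - (↑k + 1))
      ≤ (((r : ℝ) - k) * (2 * C) + ((r : ℝ) - k) * (2 * C)) * ((r : ℝ) - (↑k + 1)) :=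
        mul_le_mul_of_nonneg_right habs (le_of_lt hn2)
    _ = 4 * C * (((r : ℝ) - ↑k) * ((r : ℝ) - (↑k + 1))) := by ring

private noncomputable def Vsum (r : ℕ) (C : ℝ) (k : ℕ) : ℝ :=
  ∑ j ∈ Finset.range k, (4 * C / ((r : ℝ) - ((j : ℝ) + 1))) ^ 2

private lemma mgf_bound (x : Fin r → ℝ) (C : ℝ) (hC : 0 < C) (hx : ∀ j, |x j| ≤ C) :
    ∀ k, k < r → ∀ t : ℝ,
      ∑ σ : Equiv.Perm (Fin r), Real.exp (t * pZ x k σ)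
        ≤ (Fintype.card (Equiv.Perm (Fin r)) : ℝ) * Real.exp (t ^ 2 * Vsum r C k / 2) := by
  intro k
  induction k with
  | zero =>
      intro _ t
      have hz : ∀ σ : Equiv.Perm (Fin r), pZ x 0 σ = 0 := by
        intro σ; unfold pZ pS; simp
      simp [hz, Vsum]
  | succ k ih =>
      intro hk1 t
      have hkr : k < r := by omega
      have hn2 : (0 : ℝ) < (r : ℝ) - ((k : ℝ) + 1) := by
        have : (k : ℝ) + 1 < r := by exact_mod_cast hk1
        linarith
      set B := Finset.univ.filter (fun i : Fin r => ¬ (i : ℕ) < k) with hBdef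
      have hBcard : (B.card : ℝ) = (r : ℝ) - k := by
        rw [hBdef, filt_ge_card k (by omega)]
        push_cast [Nat.cast_sub (by omega : k ≤ r)]
        ring
      have hBpos : (0 : ℝ) < (B.card : ℝ) := by
        rw [hBcard]
        have : (k : ℝ) < r := by exact_mod_cast hkr
        linarith
      set c : ℝ := 4 * C / ((r : ℝ) - ((k : ℝ) + 1)) with hc
      have hcpos : 0 < c := by rw [hc]; positivity
      -- averaging identity
      have havg : (B.card : ℝ) * ∑ σ : Equiv.Perm (Fin r), Real.exp (t * pZ x (k + 1) σ)
          = ∑ σ : Equiv.Perm (Fin r), ∑ i ∈ B,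
              Real.exp (t * (pZ x k σ + pD x k σ i)) := by
        have h1 : ∀ i ∈ B, ∑ σ : Equiv.Perm (Fin r),
            Real.exp (t * pZ x (k + 1) (σ * Equiv.swap (⟨k, hkr⟩ : Fin r) i))
            = ∑ σ : Equiv.Perm (Fin r), Real.exp (t * pZ x (k + 1) σ) := by
          intro i _
          exact Equiv.sum_comp (Equiv.mulRight (Equiv.swap (⟨k, hkr⟩ : Fin r) i))
            (fun σ => Real.exp (t * pZ x (k + 1) σ))
        calc (B.card : ℝ) * ∑ σ : Equiv.Perm (Fin r), Real.exp (t * pZ x (k + 1) σ)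
            = ∑ i ∈ B, ∑ σ : Equiv.Perm (Fin r), Real.exp (t * pZ x (k + 1) σ) := by
              rw [Finset.sum_const, nsmul_eq_mul]
          _ = ∑ i ∈ B, ∑ σ : Equiv.Perm (Fin r),
                Real.exp (t * pZ x (k + 1) (σ * Equiv.swap (⟨k, hkr⟩ : Fin r) i)) :=
              (Finset.sum_congr rfl fun i hi => (h1 i hi).symm)
          _ = ∑ σ : Equiv.Perm (Fin r), ∑ i ∈ B,
                Real.exp (t * pZ x (k + 1) (σ * Equiv.swap (⟨k, hkr⟩ : Fin r) i)) :=
              Finset.sum_comm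
          _ = ∑ σ : Equiv.Perm (Fin r), ∑ i ∈ B,
                Real.exp (t * (pZ x k σ + pD x k σ i)) := by
              refine Finset.sum_congr rfl fun σ _ => Finset.sum_congr rfl fun i hi => ?_
              rw [pD_key1 x k hkr σ i]
              rw [hBdef] at hi
              exact (Finset.mem_filter.1 hi).2
      -- inner Hoeffding bound
      have hin : ∀ σ : Equiv.Perm (Fin r), ∑ i ∈ B, Real.exp (t * pD x k σ i)
          ≤ (B.card : ℝ) * Real.exp (t ^ 2 * c ^ 2 / 2) := by
        intro σ
        exact chord_exp B (pD x k σ) c t hcpos (pD_sum0 x k hk1 σ)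
          (fun i _ => pD_abs x C hC hx k hk1 σ i)
      have hmain : (B.card : ℝ) * ∑ σ : Equiv.Perm (Fin r), Real.exp (t * pZ x (k + 1) σ)
          ≤ (B.card : ℝ) * (Real.exp (t ^ 2 * c ^ 2 / 2)
              * ((Fintype.card (Equiv.Perm (Fin r)) : ℝ) * Real.exp (t ^ 2 * Vsum r C k / 2))) := by
        rw [havg]
        calc ∑ σ : Equiv.Perm (Fin r), ∑ i ∈ B, Real.exp (t * (pZ x k σ + pD x k σ i))
            = ∑ σ : Equiv.Perm (Fin r), Real.exp (t * pZ x k σ)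
                * ∑ i ∈ B, Real.exp (t * pD x k σ i) := by
              refine Finset.sum_congr rfl fun σ _ => ?_
              rw [Finset.mul_sum]
              refine Finset.sum_congr rfl fun i _ => ?_
              rw [← Real.exp_add]; ring_nf
          _ ≤ ∑ σ : Equiv.Perm (Fin r), Real.exp (t * pZ x k σ)
                * ((B.card : ℝ) * Real.exp (t ^ 2 * c ^ 2 / 2)) := by
              refine Finset.sum_le_sum fun σ _ => ?_
              exact mul_le_mul_of_nonneg_left (hin σ) (Real.exp_nonneg _)
          _ = ((B.card : ℝ) * Real.exp (t ^ 2 * c ^ 2 / 2))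
              * ∑ σ : Equiv.Perm (Fin r), Real.exp (t * pZ x k σ) := by
              rw [← Finset.sum_mul]; ring
          _ ≤ ((B.card : ℝ) * Real.exp (t ^ 2 * c ^ 2 / 2))
              * ((Fintype.card (Equiv.Perm (Fin r)) : ℝ) * Real.exp (t ^ 2 * Vsum r C k / 2)) := by
              apply mul_le_mul_of_nonneg_left (ih hkr t)
              positivity
          _ = (B.card : ℝ) * (Real.exp (t ^ 2 * c ^ 2 / 2)
              * ((Fintype.card (Equiv.Perm (Fin r)) : ℝ) * Real.exp (t ^ 2 * Vsum r C k / 2))) := by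
              ring
      have hfin := le_of_mul_le_mul_left (by exact_mod_cast hmain) hBpos
      calc ∑ σ : Equiv.Perm (Fin r), Real.exp (t * pZ x (k + 1) σ)
          ≤ Real.exp (t ^ 2 * c ^ 2 / 2)
              * ((Fintype.card (Equiv.Perm (Fin r)) : ℝ) * Real.exp (t ^ 2 * Vsum r C k / 2)) :=
            hfin
        _ = (Fintype.card (Equiv.Perm (Fin r)) : ℝ)
              * Real.exp (t ^ 2 * Vsum r C (k + 1) / 2) := by
            have hV : Vsum r C (k + 1) = Vsum r C k + c ^ 2 := by
              rw [hc]; unfold Vsum; rw [Finset.sum_range_succ]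
            rw [hV, mul_left_comm, ← Real.exp_add]
            congr 1
            ring

private lemma chernoff_signed (x : Fin r → ℝ) (C : ℝ) (hC : 0 < C) (hx : ∀ j, |x j| ≤ C)
    (s : ℕ) (hsr : s < r) (hV : 0 < Vsum r C s) (a : ℝ) (ha : 0 < a)
    (β : ℝ) (hβ : β = 1 ∨ β = -1) :
    ((Finset.univ.filter fun σ : Equiv.Perm (Fin r) => a < β * pZ x s σ).card : ℝ)
      ≤ (Fintype.card (Equiv.Perm (Fin r)) : ℝ) * Real.exp (-(a ^ 2) / (2 * Vsum r C s)) := by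
  have hβsq : β ^ 2 = 1 := by rcases hβ with h | h <;> rw [h] <;> norm_num
  set V := Vsum r C s with hVdef
  set t := a / V with ht
  have htpos : 0 < t := by rw [ht]; positivity
  have hmgf := mgf_bound x C hC hx s hsr (β * t)
  have hexp : (β * t) ^ 2 * V / 2 = t ^ 2 * V / 2 := by
    rw [mul_pow, hβsq]; ring
  rw [hexp] at hmgf
  calc ((Finset.univ.filter fun σ : Equiv.Perm (Fin r) => a < β * pZ x s σ).card : ℝ)
      = ∑ _σ ∈ (Finset.univ.filter fun σ : Equiv.Perm (Fin r) => a < β * pZ x s σ), (1 : ℝ) := by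
        rw [Finset.sum_const, nsmul_eq_mul, mul_one]
    _ ≤ ∑ σ ∈ (Finset.univ.filter fun σ : Equiv.Perm (Fin r) => a < β * pZ x s σ),
          Real.exp (t * (β * pZ x s σ - a)) := by
        refine Finset.sum_le_sum fun σ hσ => ?_
        have hσ' := (Finset.mem_filter.1 hσ).2
        rw [show (1 : ℝ) = Real.exp 0 by rw [Real.exp_zero]]
        apply Real.exp_le_exp.2
        have : 0 ≤ β * pZ x s σ - a := by linarith
        positivity
    _ ≤ ∑ σ : Equiv.Perm (Fin r), Real.exp (t * (β * pZ x s σ - a)) := by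
        apply Finset.sum_le_sum_of_subset_of_nonneg (Finset.filter_subset _ _)
        intro σ _ _
        positivity
    _ = Real.exp (-(t * a)) * ∑ σ : Equiv.Perm (Fin r), Real.exp ((β * t) * pZ x s σ) := by
        rw [Finset.mul_sum]
        refine Finset.sum_congr rfl fun σ _ => ?_
        rw [← Real.exp_add]
        congr 1
        ring
    _ ≤ Real.exp (-(t * a)) * ((Fintype.card (Equiv.Perm (Fin r)) : ℝ)
          * Real.exp (t ^ 2 * V / 2)) :=
        mul_le_mul_of_nonneg_left hmgf (Real.exp_nonneg _)
    _ = (Fintype.card (Equiv.Perm (Fin r)) : ℝ) * Real.exp (-(a ^ 2) / (2 * V)) := by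
        rw [mul_left_comm, ← Real.exp_add]
        congr 2
        rw [ht]
        field_simp
        ring

private lemma chernoff_abs (x : Fin r → ℝ) (C : ℝ) (hC : 0 < C) (hx : ∀ j, |x j| ≤ C)
    (s : ℕ) (hs1 : 1 ≤ s) (hsr : s < r) (a : ℝ) (ha : 0 < a) :
    ((Finset.univ.filter fun σ : Equiv.Perm (Fin r) => a < |pZ x s σ|).card : ℝ)
      ≤ 2 * (Fintype.card (Equiv.Perm (Fin r)) : ℝ)
          * Real.exp (-(a ^ 2) / (2 * Vsum r C s)) := by
  have hV : 0 < Vsum r C s := by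
    unfold Vsum
    apply Finset.sum_pos' (fun j _ => by positivity)
    refine ⟨0, Finset.mem_range.2 (by omega), ?_⟩
    have : (0 : ℝ) + 1 < r := by
      have : 1 < r := by omega
      exact_mod_cast (by push_cast; exact_mod_cast this : (1 : ℝ) < r)
    have h2 : (0 : ℝ) < (r : ℝ) - ((0 : ℕ) + 1 : ℝ) := by push_cast; linarith
    positivity
  have hsub : (Finset.univ.filter fun σ : Equiv.Perm (Fin r) => a < |pZ x s σ|)
      ⊆ (Finset.univ.filter fun σ : Equiv.Perm (Fin r) => a < 1 * pZ x s σ)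
        ∪ (Finset.univ.filter fun σ : Equiv.Perm (Fin r) => a < (-1) * pZ x s σ) := by
    intro σ hσ
    have h := (Finset.mem_filter.1 hσ).2
    rcases lt_abs.1 h with h' | h'
    · exact Finset.mem_union_left _ (Finset.mem_filter.2 ⟨Finset.mem_univ _, by linarith⟩)
    · exact Finset.mem_union_right _ (Finset.mem_filter.2 ⟨Finset.mem_univ _, by linarith⟩)
  have hcard := Finset.card_le_card hsub
  have hcard2 := le_trans hcard (Finset.card_union_le _ _)
  have h1 := chernoff_signed x C hC hx s hsr hV a ha 1 (Or.inl rfl)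
  have h2 := chernoff_signed x C hC hx s hsr hV a ha (-1) (Or.inr rfl)
  have : ((Finset.univ.filter fun σ : Equiv.Perm (Fin r) => a < |pZ x s σ|).card : ℝ)
      ≤ ((Finset.univ.filter fun σ : Equiv.Perm (Fin r) => a < 1 * pZ x s σ).card : ℝ)
        + ((Finset.univ.filter fun σ : Equiv.Perm (Fin r) => a < (-1) * pZ x s σ).card : ℝ) := by
    exact_mod_cast hcard2
  linarith

private noncomputable def pFirst (s : ℕ) (σ : Equiv.Perm (Fin r)) : Finset (Fin r) :=
  (Finset.univ.filter fun i : Fin r => (i : ℕ) < s).image σ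

private lemma pFirst_card (s : ℕ) (hs : s ≤ r) (σ : Equiv.Perm (Fin r)) :
    (pFirst s σ).card = s := by
  unfold pFirst
  rw [Finset.card_image_of_injective _ σ.injective, filt_lt_card s hs]

private lemma exists_perm_image (J0 J : Finset (Fin r)) (h : J0.card = J.card) :
    ∃ g : Equiv.Perm (Fin r), J0.image g = J := by
  have e : {x // x ∈ J0} ≃ {x // x ∈ J} := Finset.equivOfCardEq h
  have hcompl : Fintype.card {x // x ∉ J0} = Fintype.card {x // x ∉ J} := by
    rw [Fintype.card_subtype_compl, Fintype.card_subtype_compl]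
    simp [Fintype.card_subtype, h]
  have e' : {x // x ∉ J0} ≃ {x // x ∉ J} := Fintype.equivOfCardEq hcompl
  refine ⟨(Equiv.sumCompl (· ∈ J0)).symm.trans ((e.sumCongr e').trans
    (Equiv.sumCompl (· ∈ J))), ?_⟩
  set g : Equiv.Perm (Fin r) := (Equiv.sumCompl (· ∈ J0)).symm.trans ((e.sumCongr e').trans
    (Equiv.sumCompl (· ∈ J))) with hg
  have hmem : ∀ j ∈ J0, g j ∈ J := by
    intro j hj
    have : g j = ((e ⟨j, hj⟩ : {x // x ∈ J}) : Fin r) := by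
      rw [hg]
      simp only [Equiv.trans_apply]
      rw [Equiv.sumCompl_symm_apply_of_pos hj]
      rfl
    rw [this]
    exact (e ⟨j, hj⟩).2
  apply Finset.eq_of_subset_of_card_le
  · intro y hy
    rcases Finset.mem_image.1 hy with ⟨j, hj, rfl⟩
    exact hmem j hj
  · rw [Finset.card_image_of_injective _ g.injective, h]

private lemma pFirst_mul (s : ℕ) (g σ : Equiv.Perm (Fin r)) :
    pFirst s (g * σ) = (pFirst s σ).image g := by
  unfold pFirst
  rw [Finset.image_image]
  rfl

private lemma fiber_const (s : ℕ) (J J' : Finset (Fin r)) (hJ : J.card = s) (hJ' : J'.card = s) :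
    (Finset.univ.filter fun σ : Equiv.Perm (Fin r) => pFirst s σ = J).card
      = (Finset.univ.filter fun σ : Equiv.Perm (Fin r) => pFirst s σ = J').card := by
  obtain ⟨g, hg⟩ := exists_perm_image J J' (by rw [hJ, hJ'])
  apply Finset.card_bij' (fun σ _ => g * σ) (fun τ _ => g⁻¹ * τ)
  · intro σ hσ
    have h := (Finset.mem_filter.1 hσ).2
    refine Finset.mem_filter.2 ⟨Finset.mem_univ _, ?_⟩
    rw [pFirst_mul, h, hg]
  · intro τ hτ
    have h := (Finset.mem_filter.1 hτ).2
    refine Finset.mem_filter.2 ⟨Finset.mem_univ _, ?_⟩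
    rw [pFirst_mul, h, ← hg, Finset.image_image]
    have : (⇑g⁻¹ ∘ ⇑g) = id := by
      funext z; simp
    rw [this, Finset.image_id]
  · intro σ _; group
  · intro τ _; group

private lemma count_ratio (s : ℕ) (hs : s ≤ r) (p : Finset (Fin r) → Prop) [DecidablePred p] :
    (((Finset.univ.filter fun J : Finset (Fin r) => J.card = s).filter p).card : ℝ)
      / ((Finset.univ.filter fun J : Finset (Fin r) => J.card = s).card : ℝ)
    = ((Finset.univ.filter fun σ : Equiv.Perm (Fin r) => p (pFirst s σ)).card : ℝ)
      / (Fintype.card (Equiv.Perm (Fin r)) : ℝ) := by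
  set K := Finset.univ.filter fun J : Finset (Fin r) => J.card = s with hK
  set Jstar : Finset (Fin r) := Finset.univ.filter fun i : Fin r => (i : ℕ) < s with hJstar
  have hJstarcard : Jstar.card = s := filt_lt_card s hs
  set F0 := (Finset.univ.filter fun σ : Equiv.Perm (Fin r) => pFirst s σ = Jstar).card with hF0
  have hfib : ∀ J ∈ K, (Finset.univ.filter fun σ : Equiv.Perm (Fin r) => pFirst s σ = J).card
      = F0 := by
    intro J hJ
    exact fiber_const s J Jstar ((Finset.mem_filter.1 hJ).2) hJstarcard
  have hF0pos : 0 < F0 := by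
    rw [hF0]
    apply Finset.card_pos.2
    refine ⟨1, Finset.mem_filter.2 ⟨Finset.mem_univ _, ?_⟩⟩
    unfold pFirst
    rw [hJstar]
    have : ∀ i : Fin r, (1 : Equiv.Perm (Fin r)) i = i := fun i => rfl
    simp
  have htot : Fintype.card (Equiv.Perm (Fin r)) = K.card * F0 := by
    have h := Finset.card_eq_sum_card_fiberwise
      (f := pFirst s) (s := (Finset.univ : Finset (Equiv.Perm (Fin r)))) (t := K)
      (fun σ _ => Finset.mem_filter.2 ⟨Finset.mem_univ _, pFirst_card s hs σ⟩)
    rw [Finset.card_univ] at h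
    have h2 : ∑ J ∈ K, (Finset.univ.filter fun σ : Equiv.Perm (Fin r) => pFirst s σ = J).card
        = ∑ _J ∈ K, F0 := Finset.sum_congr rfl hfib
    rw [h, h2, Finset.sum_const, smul_eq_mul]
  have hbad : (Finset.univ.filter fun σ : Equiv.Perm (Fin r) => p (pFirst s σ)).card
      = (K.filter p).card * F0 := by
    have h := Finset.card_eq_sum_card_fiberwise
      (f := pFirst s)
      (s := Finset.univ.filter fun σ : Equiv.Perm (Fin r) => p (pFirst s σ))
      (t := K.filter p)
      (fun σ hσ => by
        refine Finset.mem_filter.2 ⟨Finset.mem_filter.2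
          ⟨Finset.mem_univ _, pFirst_card s hs σ⟩, (Finset.mem_filter.1 hσ).2⟩)
    rw [h, Finset.sum_congr rfl (fun J hJ => ?_), Finset.sum_const, smul_eq_mul]
    have hJK : J ∈ K := Finset.mem_of_mem_filter J hJ
    have hpJ : p J := (Finset.mem_filter.1 hJ).2
    have heq : ((Finset.univ.filter fun σ : Equiv.Perm (Fin r) => p (pFirst s σ)).filter
        fun σ => pFirst s σ = J)
        = Finset.univ.filter fun σ : Equiv.Perm (Fin r) => pFirst s σ = J := by
      ext σ
      simp only [Finset.mem_filter, Finset.mem_univ, true_and]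
      constructor
      · rintro ⟨_, h2⟩; exact h2
      · intro h2; exact ⟨by rw [h2]; exact hpJ, h2⟩
    rw [heq]
    exact hfib J hJK
  have hKpos : 0 < K.card := by
    apply Finset.card_pos.2
    exact ⟨Jstar, Finset.mem_filter.2 ⟨Finset.mem_univ _, hJstarcard⟩⟩
  rw [hbad, htot]
  have hF0ne : (F0 : ℝ) ≠ 0 := by
    have : F0 ≠ 0 := by omega
    exact_mod_cast this
  push_cast
  rw [mul_div_mul_right _ _ hF0ne]

private lemma vsum_le (C : ℝ) (hC : 0 < C) :
    ∀ s, s < r → Vsum r C s ≤ 32 * C ^ 2 / ((r : ℝ) - s) := by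
  intro s
  induction s with
  | zero =>
      intro h0
      have hr : (0 : ℝ) < r := by
        have : 0 < r := by omega
        exact_mod_cast this
      unfold Vsum
      simp only [Finset.range_zero, Finset.sum_empty, Nat.cast_zero, sub_zero]
      positivity
  | succ s ih =>
      intro h1
      have hsr : s < r := by omega
      set n : ℝ := (r : ℝ) - ((s : ℝ) + 1) with hn
      have hn1 : (1 : ℝ) ≤ n := by
        rw [hn]
        have : (s : ℝ) + 2 ≤ (r : ℝ) := by exact_mod_cast (by omega : s + 2 ≤ r)
        linarith
      have hnpos : (0 : ℝ) < n := by linarith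
      have hstep : Vsum r C (s + 1) = Vsum r C s + (4 * C / n) ^ 2 := by
        rw [hn]; unfold Vsum; rw [Finset.sum_range_succ]
      have hsn : (r : ℝ) - (s : ℝ) = n + 1 := by rw [hn]; ring
      have hih : Vsum r C s ≤ 32 * C ^ 2 / (n + 1) := by
        have h := ih hsr
        rwa [hsn] at h
      have hkey : 32 * C ^ 2 / (n + 1) + (4 * C / n) ^ 2 ≤ 32 * C ^ 2 / n := by
        have hdiff : 32 * C ^ 2 / n - 32 * C ^ 2 / (n + 1) - (4 * C / n) ^ 2
            = 16 * C ^ 2 * (n - 1) / (n ^ 2 * (n + 1)) := by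
          field_simp
          ring
        have hpos : 0 ≤ 16 * C ^ 2 * (n - 1) / (n ^ 2 * (n + 1)) := by
          apply div_nonneg
          · have : 0 ≤ n - 1 := by linarith
            positivity
          · positivity
        linarith [hdiff ▸ hpos]
      have hd : (r : ℝ) - ((s + 1 : ℕ) : ℝ) = n := by rw [hn]; push_cast; ring
      rw [hd, hstep]
      linarith

end ThinningAux


open scoped Classical in
/-- concentration for uniform thinning, tested against one function.
Let `b₁, …, b_r` be points of `[0,∞)` and let `J ⊆ {1,…,r}` with `|J| = s` be chosen
uniformly.  For bounded measurable `φ` with `‖φ‖_∞ = sup_{x ≥ 0} |φ(x)| > 0` and `ε > 0`,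
the probability (counting fraction of subsets `J`) that
`|(1/r) Σ_{j∈J} φ(b_j) − (s/r)(1/r) Σ_{j=1}^r φ(b_j)| > ε`
is at most `2 exp(−r ε² / (64 ‖φ‖_∞²))`. -/
theorem thinning_concentration_single_function
    (r s : ℕ) (hr : 1 ≤ r) (hs : s ≤ r)
    (b : Fin r → ℝ) (hb : ∀ i, 0 ≤ b i)
    (φ : ℝ → ℝ) (hφmeas : Measurable φ)
    (hφbdd : BddAbove (Set.range fun x : Ici (0:ℝ) => |φ (x : ℝ)|))
    (Cφ : ℝ) (hCφ : Cφ = sSup (Set.range fun x : Ici (0:ℝ) => |φ (x : ℝ)|))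
    (hCφpos : 0 < Cφ)
    (ε : ℝ) (hε : 0 < ε) :
    (((Finset.univ.filter fun J : Finset (Fin r) => J.card = s).filter
        (fun J => ε < |((1 / (r : ℝ)) * (∑ j ∈ J, φ (b j))
          - ((s : ℝ) / r) * ((1 / (r : ℝ)) * ∑ j : Fin r, φ (b j)))|)).card : ℝ)
      / ((Finset.univ.filter fun J : Finset (Fin r) => J.card = s).card : ℝ)
      ≤ 2 * Real.exp (-((r : ℝ) * ε ^ 2) / (64 * Cφ ^ 2)) := by
  have hrpos : (0 : ℝ) < r := by exact_mod_cast hr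
  have hx : ∀ j, |(fun j => φ (b j)) j| ≤ Cφ := by
    intro j
    rw [hCφ]
    exact le_csSup hφbdd ⟨⟨b j, hb j⟩, rfl⟩
  have hRHSpos : (0 : ℝ) < 2 * Real.exp (-((r : ℝ) * ε ^ 2) / (64 * Cφ ^ 2)) := by positivity
  -- trivial cases s = 0 or s = r
  by_cases hs0 : s = 0
  · subst hs0
    have hempty : ((Finset.univ.filter fun J : Finset (Fin r) => J.card = 0).filter
        (fun J => ε < |((1 / (r : ℝ)) * (∑ j ∈ J, φ (b j))
          - ((0 : ℕ) : ℝ) / r * ((1 / (r : ℝ)) * ∑ j : Fin r, φ (b j)))|)) = ∅ := by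
      apply Finset.filter_false_of_mem
      intro J hJ
      have hJ0 : J = ∅ := Finset.card_eq_zero.1 (Finset.mem_filter.1 hJ).2
      subst hJ0
      simp
      linarith
    rw [hempty]
    simp only [Finset.card_empty, Nat.cast_zero, zero_div]
    positivity
  by_cases hsreq : s = r
  · have hempty : ((Finset.univ.filter fun J : Finset (Fin r) => J.card = s).filter
        (fun J => ε < |((1 / (r : ℝ)) * (∑ j ∈ J, φ (b j))
          - ((s : ℝ) / r) * ((1 / (r : ℝ)) * ∑ j : Fin r, φ (b j)))|)) = ∅ := by
      apply Finset.filter_false_of_mem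
      intro J hJ
      have hJu : J = Finset.univ := by
        apply Finset.eq_univ_of_card
        rw [(Finset.mem_filter.1 hJ).2, hsreq, Fintype.card_fin]
      subst hJu
      have hsr' : ((s : ℝ) / r) = 1 := by
        rw [hsreq]
        field_simp
      rw [hsr']
      simp only [one_mul]
      have : (1 / (r : ℝ)) * (∑ j : Fin r, φ (b j)) - (1 / (r : ℝ)) * ∑ j : Fin r, φ (b j) = 0 := by
        ring
      rw [this]
      simp
      linarith
    rw [hempty]
    simp only [Finset.card_empty, Nat.cast_zero, zero_div]
    positivity
  -- main case
  have hs1 : 1 ≤ s := Nat.one_le_iff_ne_zero.2 hs0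
  have hsr : s < r := lt_of_le_of_ne hs hsreq
  have hnpos : (0 : ℝ) < (r : ℝ) - s := by
    have : (s : ℝ) < r := by exact_mod_cast hsr
    linarith
  set a : ℝ := (r : ℝ) * ε / ((r : ℝ) - s) with ha
  have hapos : 0 < a := by rw [ha]; positivity
  have hNpos : (0 : ℝ) < (Fintype.card (Equiv.Perm (Fin r)) : ℝ) := by
    exact_mod_cast Fintype.card_pos
  -- predicate equivalence on permutations
  have hiff : ∀ σ : Equiv.Perm (Fin r),
      (ε < |((1 / (r : ℝ)) * (∑ j ∈ pFirst s σ, φ (b j))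
          - ((s : ℝ) / r) * ((1 / (r : ℝ)) * ∑ j : Fin r, φ (b j)))|)
      ↔ a < |pZ (fun j => φ (b j)) s σ| := by
    intro σ
    have hsum : ∑ j ∈ pFirst s σ, φ (b j) = pS (fun j => φ (b j)) s σ := by
      unfold pFirst pS
      rw [Finset.sum_image (fun i _ j _ h => σ.injective h)]
    have h2 : (1 / (r : ℝ)) * (pS (fun j => φ (b j)) s σ)
        - ((s : ℝ) / r) * ((1 / (r : ℝ)) * ∑ j : Fin r, φ (b j))
        = (((r : ℝ) - s) / r) * pZ (fun j => φ (b j)) s σ := by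
      unfold pZ
      field_simp
    rw [hsum, h2, abs_mul, abs_of_pos (by positivity : (0:ℝ) < ((r : ℝ) - s) / r)]
    constructor
    · intro h
      rw [ha, div_lt_iff₀ hnpos]
      have := abs_nonneg (pZ (fun j => φ (b j)) s σ)
      rw [div_mul_eq_mul_div, lt_div_iff₀ hrpos] at h
      linarith
    · intro h
      rw [ha, div_lt_iff₀ hnpos] at h
      rw [div_mul_eq_mul_div, lt_div_iff₀ hrpos]
      linarith
  -- pass to permutations
  rw [count_ratio s hs (fun J => ε < |((1 / (r : ℝ)) * (∑ j ∈ J, φ (b j))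
          - ((s : ℝ) / r) * ((1 / (r : ℝ)) * ∑ j : Fin r, φ (b j)))|)]
  have hfeq : (Finset.univ.filter fun σ : Equiv.Perm (Fin r) =>
      ε < |((1 / (r : ℝ)) * (∑ j ∈ pFirst s σ, φ (b j))
          - ((s : ℝ) / r) * ((1 / (r : ℝ)) * ∑ j : Fin r, φ (b j)))|)
      = Finset.univ.filter fun σ : Equiv.Perm (Fin r) =>
          a < |pZ (fun j => φ (b j)) s σ| := by
    apply Finset.filter_congr
    intro σ _
    exact hiff σ
  rw [hfeq]
  -- Chernoff bound
  have hcher := chernoff_abs (fun j => φ (b j)) Cφ hCφpos hx s hs1 hsr a hapos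
  -- exponent comparison
  have hVpos : 0 < Vsum r Cφ s := by
    unfold Vsum
    apply Finset.sum_pos' (fun j _ => by positivity)
    refine ⟨0, Finset.mem_range.2 (by omega), ?_⟩
    have h2 : (0 : ℝ) < (r : ℝ) - ((0 : ℕ) + 1 : ℝ) := by
      have : (2 : ℝ) ≤ r := by exact_mod_cast (by omega : 2 ≤ r)
      push_cast
      linarith
    positivity
  have hVle : Vsum r Cφ s ≤ 32 * Cφ ^ 2 / ((r : ℝ) - s) := vsum_le Cφ hCφpos s hsr
  have hVn : Vsum r Cφ s * ((r : ℝ) - s) ≤ 32 * Cφ ^ 2 := by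
    rw [← le_div_iff₀ hnpos] at *
    exact hVle
  have hcore : (r : ℝ) * ε ^ 2 / (64 * Cφ ^ 2) ≤ a ^ 2 / (2 * Vsum r Cφ s) := by
    rw [div_le_div_iff₀ (by positivity) (by positivity), ha, div_pow, div_mul_eq_mul_div,
      le_div_iff₀ (by positivity)]
    have hnr : (r : ℝ) - s ≤ r := by
      have : (0 : ℝ) ≤ s := by positivity
      linarith
    nlinarith [mul_le_mul_of_nonneg_left hVn
        (show (0:ℝ) ≤ 2 * r * ε^2 * ((r : ℝ) - s) by positivity),
      mul_le_mul_of_nonneg_left hnr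
        (show (0:ℝ) ≤ 64 * r * ε^2 * Cφ^2 by positivity)]
  have hexpmono : Real.exp (-(a ^ 2) / (2 * Vsum r Cφ s))
      ≤ Real.exp (-((r : ℝ) * ε ^ 2) / (64 * Cφ ^ 2)) := by
    apply Real.exp_le_exp.2
    rw [neg_div, neg_div]
    exact neg_le_neg hcore
  rw [div_le_iff₀ hNpos]
  calc ((Finset.univ.filter fun σ : Equiv.Perm (Fin r) =>
          a < |pZ (fun j => φ (b j)) s σ|).card : ℝ)
      ≤ 2 * (Fintype.card (Equiv.Perm (Fin r)) : ℝ)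
          * Real.exp (-(a ^ 2) / (2 * Vsum r Cφ s)) := hcher
    _ ≤ 2 * (Fintype.card (Equiv.Perm (Fin r)) : ℝ)
          * Real.exp (-((r : ℝ) * ε ^ 2) / (64 * Cφ ^ 2)) := by
        apply mul_le_mul_of_nonneg_left hexpmono (by positivity)
    _ = 2 * Real.exp (-((r : ℝ) * ε ^ 2) / (64 * Cφ ^ 2))
          * (Fintype.card (Equiv.Perm (Fin r)) : ℝ) := by ring
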